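/- Let G be a countable group acting faithfully on the right by homeomorphisms on a second countable Hausdorff topological space X, let 𝒰 be a countable base for the topology of X, and let μ be an invariant random subgroup of G. Then for μ-almost every subgroup H ≤ G the following holds: for all U, V ∈ 𝒰 with U ∩ V = ∅ such that some h ∈ H satisfies U·h = V, there exist σ ∈ G with U·σ = V and a finite-index subgroup Γ₀ of the group W = {g ∈ G : x·g = x for all x ∈ U·σ⁻¹, and U·g = U}, such that for every γ ∈ Γ₀ there exists h' ∈ H with U·h' = U and x·h' = x·γ for all x ∈ U. -/

import Mathlib

open MulOpposite MeasureTheory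

/-- The σ-algebra on the space of subgroups of `G`, generated by the sets
`{H : g ∈ H}` for `g ∈ G` (the Borel σ-algebra of the Chabauty topology). -/
instance subgroupMeasurableSpace (G : Type*) [Group G] : MeasurableSpace (Subgroup G) :=
  MeasurableSpace.generateFrom {A : Set (Subgroup G) | ∃ g : G, A = {H : Subgroup G | g ∈ H}}

/-- Conjugation `H ↦ g⁻¹ H g` on subgroups. -/
def conjSubgroup {G : Type*} [Group G] (g : G) (H : Subgroup G) : Subgroup G :=
  Subgroup.map (MulAut.conj g⁻¹).toMonoidHom H

/-- Pointwise stabilizer of a set `A ⊆ X` for a right action of `G` on `X`: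
`{g ∈ G : x·g = x for all x ∈ A}`. -/
def pointwiseStabilizer (G : Type*) {X : Type*} [Group G] [MulAction Gᵐᵒᵖ X] (A : Set X) :
    Subgroup G where
  carrier := {g : G | ∀ x ∈ A, op g • x = x}
  one_mem' := by intro x _; simp
  mul_mem' := by
    intro g h hg hh x hx
    have h1 : op (g * h) • x = op h • (op g • x) := by
      rw [op_mul, mul_smul]
    rw [h1, hg x hx, hh x hx]
  inv_mem' := by
    intro g hg x hx
    have h1 : op g⁻¹ • (op g • x) = x := by
      rw [op_inv]; exact inv_smul_smul _ _
    rw [hg x hx] at h1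
    exact h1

/-- Rigid stabilizer `R_G(U) = {g ∈ G : x·g = x for all x ∈ X \ U}`. -/
def rigidStabilizer (G : Type*) {X : Type*} [Group G] [MulAction Gᵐᵒᵖ X] (U : Set X) :
    Subgroup G :=
  pointwiseStabilizer G Uᶜ

/-- The fixed-point set of a subgroup `H` in `X`: `Fix(H) = {x : x·h = x for all h ∈ H}`. -/
def fixedSet (X : Type*) {G : Type*} [Group G] [MulAction Gᵐᵒᵖ X] (H : Subgroup G) : Set X :=
  {x : X | ∀ h ∈ H, op h • x = x}

/-- Setwise stabilizer `{g ∈ G : U·g = U}`. -/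
def setStabilizer (G : Type*) {X : Type*} [Group G] [MulAction Gᵐᵒᵖ X] (U : Set X) :
    Subgroup G where
  carrier := {g : G | (fun x : X => op g • x) '' U = U}
  one_mem' := by
    show (fun x : X => op (1 : G) • x) '' U = U
    simp
  mul_mem' := by
    intro g h hg hh
    show (fun x : X => op (g * h) • x) '' U = U
    have h1 : (fun x : X => op (g * h) • x)
        = (fun x : X => op h • x) ∘ (fun x : X => op g • x) := by
      funext x
      simp [op_mul, mul_smul]
    rw [h1, Set.image_comp, hg, hh]
  inv_mem' := by
    intro g hg
    show (fun x : X => op g⁻¹ • x) '' U = U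
    have h2 : (fun x : X => op g⁻¹ • x) '' ((fun x : X => op g • x) '' U) = U := by
      rw [← Set.image_comp]
      have h3 : ((fun x : X => op g⁻¹ • x) ∘ (fun x : X => op g • x)) = id := by
        funext x
        simp [op_inv]
      rw [h3, Set.image_id]
    rw [hg] at h2
    exact h2
section AuxIRS

open MulOpposite MeasureTheory
open scoped ENNReal

variable {G X : Type*} [Group G] [MulAction Gᵐᵒᵖ X]

lemma op_smul_mul' (g₁ g₂ : G) (x : X) : op (g₁ * g₂) • x = op g₂ • op g₁ • x := by
  rw [op_mul, mul_smul]

lemma op_inv_op_smul' (g : G) (x : X) : op g⁻¹ • op g • x = x := by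
  rw [← op_smul_mul', mul_inv_cancel, op_one, one_smul]

lemma op_op_inv_smul' (g : G) (x : X) : op g • op g⁻¹ • x = x := by
  rw [← op_smul_mul', inv_mul_cancel, op_one, one_smul]

lemma mem_pointwiseStabilizer' {A : Set X} {g : G} :
    g ∈ pointwiseStabilizer G A ↔ ∀ x ∈ A, op g • x = x := Iff.rfl

lemma mem_setStabilizer' {U : Set X} {g : G} :
    g ∈ setStabilizer G U ↔ (fun x : X => op g • x) '' U = U := Iff.rfl

/-- The group `W` of the statement. -/
def wgp (U : Set X) (h : G) : Subgroup G :=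
  pointwiseStabilizer G ((fun x : X => op h⁻¹ • x) '' U) ⊓ setStabilizer G U

/-- `h'` preserves `U` and agrees with `γ` on `U`. -/
def Realizes (U : Set X) (h' γ : G) : Prop :=
  (fun x : X => op h' • x) '' U = U ∧ ∀ x ∈ U, op h' • x = op γ • x

lemma Realizes.one' (U : Set X) : Realizes (G := G) U 1 1 := by
  constructor
  · simp
  · intro x _; rfl

lemma Realizes.mul' {U : Set X} {h₁ h₂ γ₁ γ₂ : G} (r₁ : Realizes U h₁ γ₁)
    (r₂ : Realizes U h₂ γ₂) : Realizes U (h₁ * h₂) (γ₁ * γ₂) := by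
  have hmem : ∀ x ∈ U, op γ₁ • x ∈ U := fun x hx => by
    have h0 : op h₁ • x ∈ U := by
      have h0' := Set.mem_image_of_mem (fun x : X => op h₁ • x) hx
      rwa [r₁.1] at h0'
    rwa [r₁.2 x hx] at h0
  constructor
  · have hc : (fun x : X => op (h₁ * h₂) • x)
        = (fun x : X => op h₂ • x) ∘ (fun x : X => op h₁ • x) :=
      funext fun x => op_smul_mul' _ _ _
    rw [hc, Set.image_comp, r₁.1, r₂.1]
  · intro x hx
    rw [op_smul_mul', r₁.2 x hx, r₂.2 _ (hmem x hx), ← op_smul_mul']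

lemma Realizes.inv' {U : Set X} {h' γ : G} (r : Realizes U h' γ) : Realizes U h'⁻¹ γ⁻¹ := by
  have himg : (fun x : X => op h'⁻¹ • x) '' U = U := by
    conv_lhs => rw [← r.1, ← Set.image_comp]
    have h3 : ((fun x : X => op h'⁻¹ • x) ∘ fun x : X => op h' • x) = id :=
      funext fun x => op_inv_op_smul' _ _
    rw [h3, Set.image_id]
  refine ⟨himg, ?_⟩
  intro x hx
  have hz : op h'⁻¹ • x ∈ U := by
    rw [← himg]; exact Set.mem_image_of_mem _ hx
  have h1 : op γ • (op h'⁻¹ • x) = x := by rw [← r.2 _ hz, op_op_inv_smul']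
  calc op h'⁻¹ • x = op γ⁻¹ • op γ • op h'⁻¹ • x := (op_inv_op_smul' _ _).symm
    _ = op γ⁻¹ • x := by rw [h1]

/-- The subgroup of elements of `W` realized on `U` by elements of `H` preserving `U`. -/
def ksub (U : Set X) (h : G) (H : Subgroup G) : Subgroup G where
  carrier := {γ : G | γ ∈ wgp U h ∧ ∃ h' ∈ H, Realizes U h' γ}
  one_mem' := ⟨(wgp U h).one_mem, 1, H.one_mem, Realizes.one' U⟩
  mul_mem' := by
    rintro a b ⟨haw, h₁, hh₁, hr₁⟩ ⟨hbw, h₂, hh₂, hr₂⟩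
    exact ⟨(wgp U h).mul_mem haw hbw, h₁ * h₂, H.mul_mem hh₁ hh₂, hr₁.mul' hr₂⟩
  inv_mem' := by
    rintro a ⟨haw, h₁, hh₁, hr₁⟩
    exact ⟨(wgp U h).inv_mem haw, h₁⁻¹, H.inv_mem hh₁, hr₁.inv'⟩

lemma mem_ksub {U : Set X} {h γ : G} {H : Subgroup G} :
    γ ∈ ksub U h H ↔ γ ∈ wgp U h ∧ ∃ h' ∈ H, Realizes U h' γ := Iff.rfl

lemma mem_ksub_of_conj {U : Set X} {h : G} {H : Subgroup G} (hh : h ∈ H) {γ : G}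
    (hγ : γ ∈ wgp U h) (hc : γ⁻¹ * h * γ ∈ H) : γ ∈ ksub U h H := by
  have hpt : ∀ x ∈ U, op (h⁻¹ * (γ⁻¹ * h * γ)) • x = op γ • x := by
    intro x hx
    have hg : γ⁻¹ ∈ pointwiseStabilizer G ((fun x : X => op h⁻¹ • x) '' U) :=
      (pointwiseStabilizer G _).inv_mem (Subgroup.mem_inf.mp hγ).1
    have hy : op h⁻¹ • x ∈ (fun x : X => op h⁻¹ • x) '' U := Set.mem_image_of_mem _ hx
    have e : h⁻¹ * (γ⁻¹ * h * γ) = h⁻¹ * γ⁻¹ * h * γ := by group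
    rw [e, op_smul_mul', op_smul_mul', op_smul_mul',
      mem_pointwiseStabilizer'.mp hg _ hy, op_op_inv_smul']
  refine mem_ksub.mpr ⟨hγ, h⁻¹ * (γ⁻¹ * h * γ), H.mul_mem (H.inv_mem hh) hc, ?_, hpt⟩
  rw [Set.image_congr hpt]
  exact mem_setStabilizer'.mp (Subgroup.mem_inf.mp hγ).2

lemma ksub_le_ksub {U : Set X} {h : G} {H₁ H₂ : Subgroup G} {ε : G} (hε : ε ∈ ksub U h H₁)
    (hm : ∀ x : G, x ∈ H₂ ↔ ε⁻¹ * x * ε ∈ H₁) : ksub U h H₁ ≤ ksub U h H₂ := by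
  intro γ hγ
  obtain ⟨hγw, h', hh', hr'⟩ := mem_ksub.mp hγ
  obtain ⟨hεw, e', he', hre⟩ := mem_ksub.mp hε
  have hpt : ∀ x ∈ U, op (ε * e'⁻¹ * h' * e' * ε⁻¹) • x = op γ • x := by
    intro x hx
    have hγx : op γ • x ∈ U := by
      have h0 : op h' • x ∈ U := by
        have h0' := Set.mem_image_of_mem (fun x : X => op h' • x) hx
        rwa [hr'.1] at h0'
      rwa [hr'.2 x hx] at h0
    simp only [op_smul_mul']
    rw [← hre.2 x hx, op_inv_op_smul', hr'.2 x hx, hre.2 _ hγx, op_inv_op_smul']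
  refine mem_ksub.mpr ⟨hγw, ε * e'⁻¹ * h' * e' * ε⁻¹, ?_, ?_, hpt⟩
  · rw [hm]
    have e : ε⁻¹ * (ε * e'⁻¹ * h' * e' * ε⁻¹) * ε = e'⁻¹ * (h' * e') := by group
    rw [e]
    exact H₁.mul_mem (H₁.inv_mem he') (H₁.mul_mem hh' he')
  · rw [Set.image_congr hpt]
    exact mem_setStabilizer'.mp (Subgroup.mem_inf.mp hγw).2

lemma ksub_eq {U : Set X} {h : G} {H₁ H₂ : Subgroup G} {ε : G} (hε : ε ∈ ksub U h H₁)
    (hm : ∀ x : G, x ∈ H₂ ↔ ε⁻¹ * x * ε ∈ H₁) : ksub U h H₂ = ksub U h H₁ := by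
  have h12 : ksub U h H₁ ≤ ksub U h H₂ := ksub_le_ksub hε hm
  refine le_antisymm (ksub_le_ksub (ε := ε⁻¹) (h12 ((ksub U h H₁).inv_mem hε)) fun x => ?_) h12
  have e : ε⁻¹ * (ε * x * ε⁻¹) * ε = x := by group
  rw [inv_inv, hm, e]

lemma mem_conjSubgroup {g x : G} {H : Subgroup G} : x ∈ conjSubgroup g H ↔ g * x * g⁻¹ ∈ H := by
  unfold conjSubgroup
  rw [Subgroup.mem_map]
  constructor
  · rintro ⟨y, hy, rfl⟩
    have e : g * ((MulAut.conj g⁻¹).toMonoidHom y) * g⁻¹ = y := by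
      simp only [MulEquiv.toMonoidHom_eq_coe, MonoidHom.coe_coe, MulAut.conj_apply]
      group
    rw [e]; exact hy
  · intro hx
    refine ⟨g * x * g⁻¹, hx, ?_⟩
    simp only [MulEquiv.toMonoidHom_eq_coe, MonoidHom.coe_coe, MulAut.conj_apply]
    group

lemma measurableSet_memSub (g : G) : MeasurableSet {H : Subgroup G | g ∈ H} :=
  MeasurableSpace.measurableSet_generateFrom ⟨g, rfl⟩

lemma measurable_conjSubgroup (g : G) :
    Measurable (fun H : Subgroup G => conjSubgroup g H) := by
  refine measurable_generateFrom ?_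
  rintro t ⟨g', rfl⟩
  have e : (fun H : Subgroup G => conjSubgroup g H) ⁻¹' {H | g' ∈ H}
      = {H : Subgroup G | g * g' * g⁻¹ ∈ H} := by
    ext H
    simp only [Set.mem_preimage, Set.mem_setOf_eq, mem_conjSubgroup]
  rw [e]
  exact measurableSet_memSub _

lemma measurableSet_mem_ksub [Countable G] (U : Set X) (h γ : G) :
    MeasurableSet {H : Subgroup G | γ ∈ ksub U h H} := by
  have e : {H : Subgroup G | γ ∈ ksub U h H} =
      ⋃ (h' : G) (_ : γ ∈ wgp U h ∧ Realizes U h' γ), {H : Subgroup G | h' ∈ H} := by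
    ext H
    simp only [Set.mem_setOf_eq, Set.mem_iUnion, mem_ksub]
    constructor
    · rintro ⟨hw, h', hh', hr⟩; exact ⟨h', ⟨hw, hr⟩, hh'⟩
    · rintro ⟨h', ⟨hw, hr⟩, hh'⟩; exact ⟨hw, h', hh', hr⟩
  rw [e]
  exact MeasurableSet.iUnion fun h' => MeasurableSet.iUnion fun _ => measurableSet_memSub h'

end AuxIRS
section CoreIRS

open MulOpposite MeasureTheory
open scoped ENNReal

lemma irs_core {G X : Type*} [Group G] [Countable G] [MulAction Gᵐᵒᵖ X]
    (U : Set X) (h : G) (μ : Measure (Subgroup G)) [IsProbabilityMeasure μ]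
    (hinv : ∀ g : G, ∀ B : Set (Subgroup G), MeasurableSet B →
      μ ((fun H : Subgroup G => conjSubgroup g H) ⁻¹' B) = μ B) :
    ∀ᵐ H ∂μ, h ∈ H → (ksub U h H).relIndex (wgp U h) ≠ 0 := by
  classical
  obtain ⟨enc, henc⟩ := Countable.exists_injective_nat G
  set C : G → Set (Subgroup G) := fun w =>
    {H : Subgroup G | h ∈ H ∧ w ∈ wgp U h ∧ w ∉ ksub U h H ∧
      ∀ u : G, w⁻¹ * u ∈ ksub U h H → enc w ≤ enc u} with hC
  have measC : ∀ w, MeasurableSet (C w) := by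
    intro w
    have m2 : MeasurableSet {H : Subgroup G | w ∈ wgp U h} := by
      by_cases hw : w ∈ wgp U h
      · have : {H : Subgroup G | w ∈ wgp U h} = Set.univ := by ext H; simp [hw]
        rw [this]; exact MeasurableSet.univ
      · have : {H : Subgroup G | w ∈ wgp U h} = ∅ := by ext H; simp [hw]
        rw [this]; exact MeasurableSet.empty
    have m4 : ∀ u : G,
        MeasurableSet {H : Subgroup G | w⁻¹ * u ∈ ksub U h H → enc w ≤ enc u} := by
      intro u
      by_cases hq : enc w ≤ enc u
      · have : {H : Subgroup G | w⁻¹ * u ∈ ksub U h H → enc w ≤ enc u} = Set.univ := by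
          ext H; simp [hq]
        rw [this]; exact MeasurableSet.univ
      · have : {H : Subgroup G | w⁻¹ * u ∈ ksub U h H → enc w ≤ enc u}
            = {H : Subgroup G | w⁻¹ * u ∈ ksub U h H}ᶜ := by
          ext H; simp [hq]
        rw [this]; exact (measurableSet_mem_ksub U h _).compl
    have e : C w = ({H : Subgroup G | h ∈ H} ∩ {H : Subgroup G | w ∈ wgp U h}) ∩
        ({H : Subgroup G | w ∈ ksub U h H}ᶜ ∩
          ⋂ u : G, {H : Subgroup G | w⁻¹ * u ∈ ksub U h H → enc w ≤ enc u}) := by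
      ext H
      simp only [hC, Set.mem_setOf_eq, Set.mem_inter_iff, Set.mem_compl_iff, Set.mem_iInter]
      tauto
    rw [e]
    exact ((measurableSet_memSub h).inter m2).inter
      ((measurableSet_mem_ksub U h w).compl.inter (MeasurableSet.iInter m4))
  set Y : G → Set (Subgroup G) := fun w =>
    (fun H : Subgroup G => conjSubgroup w H) ⁻¹' C w with hY
  have measY : ∀ w, MeasurableSet (Y w) := fun w => (measurable_conjSubgroup w) (measC w)
  have hdisjY : Pairwise (Function.onFun Disjoint Y) := by
    intro w w' hne
    rw [Function.onFun, Set.disjoint_left]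
    intro H' hw hw'
    simp only [hY, hC, Set.mem_preimage, Set.mem_setOf_eq] at hw hw'
    obtain ⟨c1, c2, c3, c4⟩ := hw
    obtain ⟨c1', c2', c3', c4'⟩ := hw'
    have hm : ∀ x : G, x ∈ conjSubgroup w' H' ↔
        (w'⁻¹ * w)⁻¹ * x * (w'⁻¹ * w) ∈ conjSubgroup w H' := by
      intro x
      rw [mem_conjSubgroup, mem_conjSubgroup]
      have e : w * ((w'⁻¹ * w)⁻¹ * x * (w'⁻¹ * w)) * w⁻¹ = w' * x * w'⁻¹ := by group
      rw [e]
    have hεw : w'⁻¹ * w ∈ wgp U h := (wgp U h).mul_mem ((wgp U h).inv_mem c2') c2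
    have hconj : (w'⁻¹ * w)⁻¹ * h * (w'⁻¹ * w) ∈ conjSubgroup w H' := (hm h).mp c1'
    have hεK : w'⁻¹ * w ∈ ksub U h (conjSubgroup w H') := mem_ksub_of_conj c1 hεw hconj
    have hKeq : ksub U h (conjSubgroup w' H') = ksub U h (conjSubgroup w H') := ksub_eq hεK hm
    have le1 : enc w ≤ enc w' := by
      refine c4 w' ?_
      have e : w⁻¹ * w' = (w'⁻¹ * w)⁻¹ := by group
      rw [e]
      exact (ksub U h _).inv_mem hεK
    have le2 : enc w' ≤ enc w := c4' w (hKeq ▸ hεK)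
    exact hne (henc (le_antisymm le1 le2))
  have hsum : ∑' w : G, μ (C w) ≤ 1 := by
    have h1 : ∀ w : G, μ (C w) = μ (Y w) := fun w => (hinv w (C w) (measC w)).symm
    calc ∑' w : G, μ (C w) = ∑' w : G, μ (Y w) := tsum_congr h1
      _ = μ (⋃ w : G, Y w) := (measure_iUnion hdisjY measY).symm
      _ ≤ 1 := prob_le_one
  have hmeasInd : ∀ w : G, Measurable ((C w).indicator (1 : Subgroup G → ℝ≥0∞)) :=
    fun w => measurable_one.indicator (measC w)
  have hint : ∫⁻ H, ∑' w : G, (C w).indicator (1 : Subgroup G → ℝ≥0∞) H ∂μ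
      = ∑' w : G, μ (C w) := by
    rw [lintegral_tsum fun w => (hmeasInd w).aemeasurable]
    exact tsum_congr fun w => lintegral_indicator_one (measC w)
  have hae : ∀ᵐ H ∂μ, (∑' w : G, (C w).indicator (1 : Subgroup G → ℝ≥0∞) H) < ⊤ := by
    refine ae_lt_top (Measurable.ennreal_tsum hmeasInd) ?_
    rw [hint]
    exact ne_top_of_le_ne_top ENNReal.one_ne_top hsum
  filter_upwards [hae] with H hfin hh
  -- T is finite
  have hT : {w : G | H ∈ C w}.Finite := by
    by_contra hinf
    have hinf' : {w : G | H ∈ C w}.Infinite := hinf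
    have e1 : ∀ w : G, (C w).indicator (1 : Subgroup G → ℝ≥0∞) H
        = {w : G | H ∈ C w}.indicator (1 : G → ℝ≥0∞) w := by
      intro w
      by_cases hw : H ∈ C w
      · rw [Set.indicator_of_mem hw, Set.indicator_of_mem (show w ∈ {w : G | H ∈ C w} from hw)]
        rfl
      · rw [Set.indicator_of_notMem hw,
          Set.indicator_of_notMem (show w ∉ {w : G | H ∈ C w} from hw)]
    have e2 : (∑' w : G, (C w).indicator (1 : Subgroup G → ℝ≥0∞) H) = ⊤ := by
      rw [tsum_congr e1, ← tsum_subtype]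
      haveI := hinf'.to_subtype
      exact ENNReal.tsum_const_eq_top_of_ne_zero one_ne_zero
    rw [e2] at hfin
    exact lt_irrefl _ hfin
  -- canonical coset representatives
  set Γ := ksub U h H with hΓ
  have hne' : ∀ u : G, (enc '' {v : G | u⁻¹ * v ∈ Γ}).Nonempty := by
    intro u
    exact ⟨enc u, u, by rw [Set.mem_setOf_eq, inv_mul_cancel]; exact Γ.one_mem, rfl⟩
  have hsInf : ∀ u : G, sInf (enc '' {v : G | u⁻¹ * v ∈ Γ}) ∈ enc '' {v : G | u⁻¹ * v ∈ Γ} :=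
    fun u => Nat.sInf_mem (hne' u)
  set c : G → G := fun u => (hsInf u).choose with hcdef
  have hc1 : ∀ u : G, u⁻¹ * c u ∈ Γ := fun u => (hsInf u).choose_spec.1
  have hc2 : ∀ u v : G, u⁻¹ * v ∈ Γ → enc (c u) ≤ enc v := by
    intro u v hv
    have e : enc (c u) = sInf (enc '' {v : G | u⁻¹ * v ∈ Γ}) := (hsInf u).choose_spec.2
    rw [e]
    exact Nat.sInf_le ⟨v, hv, rfl⟩
  have hc3 : ∀ u u' : G, u⁻¹ * u' ∈ Γ → c u = c u' := by
    intro u u' huu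
    have k1 : u⁻¹ * c u' ∈ Γ := by
      have e : u⁻¹ * c u' = (u⁻¹ * u') * (u'⁻¹ * c u') := by group
      rw [e]; exact Γ.mul_mem huu (hc1 u')
    have k2 : u'⁻¹ * c u ∈ Γ := by
      have e : u'⁻¹ * c u = (u⁻¹ * u')⁻¹ * (u⁻¹ * c u) := by group
      rw [e]; exact Γ.mul_mem (Γ.inv_mem huu) (hc1 u)
    exact henc (le_antisymm (hc2 u (c u') k1) (hc2 u' (c u) k2))
  set Wg := wgp U h with hWg
  have hle : Γ ≤ Wg := fun γ hγ => (mem_ksub.mp hγ).1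
  let Φ : (Wg ⧸ Γ.subgroupOf Wg) → G := fun q =>
    Quotient.liftOn' q (fun u => c (u : G)) (by
      intro a b hab
      refine hc3 _ _ ?_
      have h1 := QuotientGroup.leftRel_apply.mp hab
      rw [Subgroup.mem_subgroupOf] at h1
      simpa using h1)
  have hΦmk : ∀ u : Wg, Φ (QuotientGroup.mk u) = c (u : G) := fun u => rfl
  have hΦinj : Function.Injective Φ := by
    intro q q'
    refine Quotient.inductionOn₂' q q' ?_
    intro u u' heq
    have heq' : c (u : G) = c (u' : G) := heq
    have key : (u : G)⁻¹ * (u' : G) ∈ Γ := by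
      have e : (u : G)⁻¹ * (u' : G)
          = ((u : G)⁻¹ * c (u : G)) * ((u' : G)⁻¹ * c (u' : G))⁻¹ := by
        rw [heq']; group
      rw [e]
      exact Γ.mul_mem (hc1 _) (Γ.inv_mem (hc1 _))
    refine Quotient.sound' (QuotientGroup.leftRel_apply.mpr ?_)
    rw [Subgroup.mem_subgroupOf]
    simpa using key
  have hrange : ∀ q, Φ q ∈ insert (c 1) {w : G | H ∈ C w} := by
    refine fun q => Quotient.inductionOn' q ?_
    intro u
    have hΦu : Φ (Quotient.mk'' u) = c (u : G) := rfl
    rw [hΦu]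
    by_cases hu : (u : G) ∈ Γ
    · have e : c (u : G) = c 1 := by
        refine hc3 _ _ ?_
        rw [mul_one]
        exact Γ.inv_mem hu
      rw [e]
      exact Set.mem_insert _ _
    · refine Set.mem_insert_iff.mpr (Or.inr ?_)
      rw [Set.mem_setOf_eq, hC]
      refine ⟨hh, ?_, ?_, ?_⟩
      · have e : c (u : G) = (u : G) * ((u : G)⁻¹ * c (u : G)) := by group
        rw [e]
        exact Wg.mul_mem u.2 (hle (hc1 _))
      · intro hcu
        refine hu ?_
        have e : (u : G) = (c (u : G)) * ((u : G)⁻¹ * c (u : G))⁻¹ := by group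
        rw [e]
        exact Γ.mul_mem hcu (Γ.inv_mem (hc1 _))
      · intro v hv
        refine hc2 (u : G) v ?_
        have e : (u : G)⁻¹ * v = ((u : G)⁻¹ * c (u : G)) * ((c (u : G))⁻¹ * v) := by group
        rw [e]
        exact Γ.mul_mem (hc1 _) hv
  haveI hfinT : Finite ↥(insert (c 1) {w : G | H ∈ C w}) := (hT.insert (c 1)).to_subtype
  haveI : Finite (Wg ⧸ Γ.subgroupOf Wg) :=
    Finite.of_injective
      (fun q => (⟨Φ q, hrange q⟩ : ↥(insert (c 1) {w : G | H ∈ C w})))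
      (fun q q' e => hΦinj (congrArg Subtype.val e))
  show (Γ.subgroupOf Wg).index ≠ 0
  exact Subgroup.index_ne_zero_of_finite

end CoreIRS

set_option maxHeartbeats 1000000 in
/-- **Proposition 3.1(i).** Let `G` be a countable group acting faithfully by
homeomorphisms on a second countable Hausdorff space `X` (encoded as a left action of
`Gᵐᵒᵖ`, so `x·g = op g • x`), let `𝒰` be a countable base of the topology and `μ` an
invariant random subgroup of `G`.  Then for `μ`-a.e. `H`: whenever `U, V ∈ 𝒰` are
disjoint and some `h ∈ H` maps `U` onto `V`, there exist `σ ∈ G` mapping `U` onto `V`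
and a finite-index subgroup `Γ₀` of `W = {g : g fixes U·σ⁻¹ pointwise and U·g = U}`
such that every `γ ∈ Γ₀` agrees on `U` with some element `h' ∈ H` preserving `U`. -/
theorem irs_coset_finite_index
    {G X : Type*} [Group G] [Countable G] [TopologicalSpace X]
    [SecondCountableTopology X] [T2Space X] [MulAction Gᵐᵒᵖ X]
    (hcont : ∀ g : G, Continuous fun x : X => op g • x)
    (hfaith : ∀ g : G, (∀ x : X, op g • x = x) → g = 1)
    (𝒰 : Set (Set X)) (h𝒰 : TopologicalSpace.IsTopologicalBasis 𝒰)
    (h𝒰c : 𝒰.Countable)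
    (μ : Measure (Subgroup G)) [IsProbabilityMeasure μ]
    (hinv : ∀ g : G, ∀ B : Set (Subgroup G), MeasurableSet B →
      μ ((fun H : Subgroup G => conjSubgroup g H) ⁻¹' B) = μ B) :
    ∀ᵐ H ∂μ, ∀ U ∈ 𝒰, ∀ V ∈ 𝒰, U ∩ V = ∅ →
      (∃ h ∈ H, (fun x : X => op h • x) '' U = V) →
      ∃ σ : G, (fun x : X => op σ • x) '' U = V ∧
        ∃ Γ₀ : Subgroup G,
          Γ₀ ≤ pointwiseStabilizer G ((fun x : X => op σ⁻¹ • x) '' U) ⊓ setStabilizer G U ∧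
          Γ₀.relIndex
            (pointwiseStabilizer G ((fun x : X => op σ⁻¹ • x) '' U) ⊓ setStabilizer G U) ≠ 0 ∧
          ∀ γ ∈ Γ₀, ∃ h' ∈ H, (fun x : X => op h' • x) '' U = U ∧
            ∀ x ∈ U, op h' • x = op γ • x := by
  haveI hcount : Countable ↥𝒰 := h𝒰c.to_subtype
  have main : ∀ᵐ H ∂μ, ∀ p : ↥𝒰 × G, p.2 ∈ H →
      (ksub (↑p.1 : Set X) p.2 H).relIndex (wgp (↑p.1 : Set X) p.2) ≠ 0 :=
    MeasureTheory.ae_all_iff.mpr (fun p : ↥𝒰 × G => irs_core (↑p.1 : Set X) p.2 μ hinv)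
  filter_upwards [main] with H hH
  rintro U hU V hV hdisj ⟨g, hgH, hgim⟩
  refine ⟨g, hgim, ksub U g H, ?_, ?_, ?_⟩
  · exact fun γ hγ => (mem_ksub.mp hγ).1
  · exact hH ⟨⟨U, hU⟩, g⟩ hgH
  · exact fun γ hγ => (mem_ksub.mp hγ).2
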